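/- Let f : [a,b] → (0,∞) be continuous and of bounded variation, let g : [a,b] → [0,∞) be of bounded variation with g(a) = 0, and let μ be the finite positive Borel measure on [a,b] with density f^{−1} with respect to the variation measure ν of f (so ν([c,d)) = V_c^d f for a ≤ c < d ≤ b). If ∫_a^y f(x) dg(x) ≤ 0 for all y ∈ (a,b], then f(y) g(y) ≤ ∫_{[a,y)} f(x) g(x) μ(dx) for all y ∈ (a,b], and consequently g(x) = 0 for all x ∈ [a,b]. -/

import Mathlib

open Set Filter MeasureTheory
open scoped ENNReal NNReal Topology

/-- The Riemann–Stieltjes sum of `f` with respect to `g` for the tagged partition with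
points `t 0, …, t m` and tags `ξ 0, …, ξ (m-1)`. -/
noncomputable def RSSum (f g : ℝ → ℝ) (m : ℕ) (t ξ : ℕ → ℝ) : ℝ :=
  ∑ i ∈ Finset.range m, f (ξ i) * (g (t (i + 1)) - g (t i))

/-- `t`, `ξ` form a tagged partition of `[a, b]` into `m` subintervals. -/
def IsTaggedPartition (a b : ℝ) (m : ℕ) (t ξ : ℕ → ℝ) : Prop :=
  0 < m ∧ t 0 = a ∧ t m = b ∧ (∀ i < m, t i < t (i + 1)) ∧
    ∀ i < m, ξ i ∈ Set.Icc (t i) (t (i + 1))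

/-- `I` is the Riemann–Stieltjes integral `∫_a^b f dg`: the Riemann–Stieltjes sums tend to `I`
as the mesh of the tagged partition tends to zero. -/
def HasRSIntegral (f g : ℝ → ℝ) (a b : ℝ) (I : ℝ) : Prop :=
  ∀ ε > 0, ∃ δ > 0, ∀ (m : ℕ) (t ξ : ℕ → ℝ), IsTaggedPartition a b m t ξ →
    (∀ i < m, t (i + 1) - t i < δ) → |RSSum f g m t ξ - I| < ε

open Classical in
/-- The Riemann–Stieltjes integral `∫_a^b f dg`, defaulting to `0` if it does not exist. -/
noncomputable def RSIntegral (f g : ℝ → ℝ) (a b : ℝ) : ℝ :=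
  if h : ∃ I, HasRSIntegral f g a b I then h.choose else 0

namespace RSAux

lemma tp_le {a b : ℝ} {m : ℕ} {t ξ : ℕ → ℝ} (h : IsTaggedPartition a b m t ξ) :
    ∀ {i j : ℕ}, i ≤ j → j ≤ m → t i ≤ t j := by
  obtain ⟨hm, h0, hm', hlt, hξ⟩ := h
  intro i j hij hjm
  induction j with
  | zero => simp [Nat.le_zero.mp hij]
  | succ n ih =>
    rcases Nat.eq_or_lt_of_le hij with rfl | hij'
    · exact le_rfl
    · exact le_trans (ih (Nat.lt_succ_iff.mp hij') (le_trans (Nat.le_succ n) hjm))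
        (le_of_lt (hlt n (Nat.lt_of_succ_le hjm)))

lemma tp_mem {a b : ℝ} {m : ℕ} {t ξ : ℕ → ℝ} (h : IsTaggedPartition a b m t ξ)
    {i : ℕ} (hi : i ≤ m) : t i ∈ Set.Icc a b := by
  constructor
  · rw [← h.2.1]; exact tp_le h (Nat.zero_le i) hi
  · rw [← h.2.2.1]; exact tp_le h hi le_rfl

lemma tp_tag_mem {a b : ℝ} {m : ℕ} {t ξ : ℕ → ℝ} (h : IsTaggedPartition a b m t ξ)
    {i : ℕ} (hi : i < m) : ξ i ∈ Set.Icc a b := by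
  obtain ⟨h1, h2⟩ := h.2.2.2.2 i hi
  exact ⟨le_trans (tp_mem h hi.le).1 h1, le_trans h2 (tp_mem h hi).2⟩

lemma RSSum_congr {f₁ f₂ g₁ g₂ : ℝ → ℝ} {a b : ℝ} {m : ℕ} {t ξ : ℕ → ℝ}
    (h : IsTaggedPartition a b m t ξ)
    (hf : ∀ x ∈ Set.Icc a b, f₁ x = f₂ x) (hg : ∀ x ∈ Set.Icc a b, g₁ x = g₂ x) :
    RSSum f₁ g₁ m t ξ = RSSum f₂ g₂ m t ξ := by
  unfold RSSum
  refine Finset.sum_congr rfl fun i hi => ?_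
  rw [Finset.mem_range] at hi
  rw [hf _ (tp_tag_mem h hi), hg _ (tp_mem h (i := i + 1) (Nat.succ_le_of_lt hi)),
    hg _ (tp_mem h (i := i) hi.le)]

lemma HasRSIntegral_congr {f₁ f₂ g₁ g₂ : ℝ → ℝ} {a b I : ℝ}
    (hf : ∀ x ∈ Set.Icc a b, f₁ x = f₂ x) (hg : ∀ x ∈ Set.Icc a b, g₁ x = g₂ x)
    (h : HasRSIntegral f₁ g₁ a b I) : HasRSIntegral f₂ g₂ a b I := by
  intro ε hε
  obtain ⟨δ, hδ, H⟩ := h ε hε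
  exact ⟨δ, hδ, fun m t ξ htp hm => by
    rw [← RSSum_congr htp hf hg]; exact H m t ξ htp hm⟩

lemma HasRSIntegral.sub {f g₁ g₂ : ℝ → ℝ} {a b I₁ I₂ : ℝ}
    (h₁ : HasRSIntegral f g₁ a b I₁) (h₂ : HasRSIntegral f g₂ a b I₂) :
    HasRSIntegral f (g₁ - g₂) a b (I₁ - I₂) := by
  intro ε hε
  obtain ⟨δ₁, hδ₁, H₁⟩ := h₁ (ε / 2) (by linarith)
  obtain ⟨δ₂, hδ₂, H₂⟩ := h₂ (ε / 2) (by linarith)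
  refine ⟨min δ₁ δ₂, lt_min hδ₁ hδ₂, fun m t ξ htp hm => ?_⟩
  have e : RSSum f (g₁ - g₂) m t ξ = RSSum f g₁ m t ξ - RSSum f g₂ m t ξ := by
    unfold RSSum
    rw [← Finset.sum_sub_distrib]
    exact Finset.sum_congr rfl fun i _ => by simp [Pi.sub_apply]; ring
  have h1 := H₁ m t ξ htp (fun i hi => lt_of_lt_of_le (hm i hi) (min_le_left _ _))
  have h2 := H₂ m t ξ htp (fun i hi => lt_of_lt_of_le (hm i hi) (min_le_right _ _))
  rw [e]
  calc |RSSum f g₁ m t ξ - RSSum f g₂ m t ξ - (I₁ - I₂)|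
      ≤ |RSSum f g₁ m t ξ - I₁| + |RSSum f g₂ m t ξ - I₂| := by
        rw [abs_sub_comm (RSSum f g₂ m t ξ) I₂] at *
        calc _ = |(RSSum f g₁ m t ξ - I₁) + (I₂ - RSSum f g₂ m t ξ)| := by ring_nf
        _ ≤ _ := abs_add_le _ _
  _ < ε := by linarith

/-- the uniform partition -/
noncomputable def up (a y : ℝ) (n : ℕ) (i : ℕ) : ℝ := a + i * ((y - a) / n)

lemma up_step (a y : ℝ) (n : ℕ) (i : ℕ) :
    up a y n (i + 1) - up a y n i = (y - a) / n := by
  simp [up]; ring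

lemma up_tagged {a y : ℝ} (hay : a < y) {n : ℕ} (hn : 0 < n) :
    IsTaggedPartition a y n (up a y n) (up a y n) := by
  have hn' : (0:ℝ) < n := by exact_mod_cast hn
  have hya : (0:ℝ) < y - a := sub_pos.mpr hay
  have hstep : (0:ℝ) < (y - a) / n := by positivity
  refine ⟨hn, by simp [up], ?_, fun i _ => ?_, fun i _ => ?_⟩
  · have hnn : (n:ℝ) * ((y - a) / n) = y - a := by field_simp
    simp only [up, hnn]; ring
  · have := up_step a y n i; linarith
  · exact ⟨le_rfl, by have := up_step a y n i; linarith⟩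

lemma hasRS_unique {f g : ℝ → ℝ} {a y I I' : ℝ} (hay : a < y)
    (h : HasRSIntegral f g a y I) (h' : HasRSIntegral f g a y I') : I = I' := by
  by_contra hne
  have hε : 0 < |I - I'| / 2 := by
    have : I - I' ≠ 0 := sub_ne_zero.mpr hne
    positivity
  have hya : (0:ℝ) < y - a := sub_pos.mpr hay
  obtain ⟨δ₁, hδ₁, H₁⟩ := h _ hε
  obtain ⟨δ₂, hδ₂, H₂⟩ := h' _ hε
  obtain ⟨n, hn⟩ := exists_nat_gt ((y - a) / min δ₁ δ₂)
  have hpos : (0:ℝ) < (y - a) / min δ₁ δ₂ := by positivity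
  have hn0 : 0 < n := by
    have h1 : (0:ℝ) < n := lt_trans hpos hn
    exact_mod_cast h1
  have hn' : (0:ℝ) < n := by exact_mod_cast hn0
  have hmesh : (y - a) / n < min δ₁ δ₂ := by
    rw [div_lt_iff₀ hn']
    rw [div_lt_iff₀ (lt_min hδ₁ hδ₂)] at hn
    linarith [mul_comm (min δ₁ δ₂) (n:ℝ)]
  have htp := up_tagged hay hn0
  have hm : ∀ i < n, up a y n (i+1) - up a y n i < min δ₁ δ₂ := fun i _ => by
    rw [up_step]; exact hmesh
  have e1 := H₁ n _ _ htp (fun i hi => lt_of_lt_of_le (hm i hi) (min_le_left _ _))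
  have e2 := H₂ n _ _ htp (fun i hi => lt_of_lt_of_le (hm i hi) (min_le_right _ _))
  have : |I - I'| < |I - I'| := by
    calc |I - I'| = |(RSSum f g n (up a y n) (up a y n) - I') - (RSSum f g n (up a y n) (up a y n) - I)| := by ring_nf
    _ ≤ |RSSum f g n (up a y n) (up a y n) - I'| + |RSSum f g n (up a y n) (up a y n) - I| := abs_sub _ _
    _ < |I - I'| / 2 + |I - I'| / 2 := by linarith
    _ = |I - I'| := by ring
  exact absurd this (lt_irrefl _)

lemma RSIntegral_eq {f g : ℝ → ℝ} {a y I : ℝ} (hay : a < y)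
    (h : HasRSIntegral f g a y I) : RSIntegral f g a y = I := by
  rw [RSIntegral, dif_pos ⟨I, h⟩]
  exact hasRS_unique hay (Exists.choose_spec ⟨I, h⟩) h


lemma exists_mem_Ioc {m : ℕ} {t : ℕ → ℝ} {x : ℝ} (h0 : t 0 < x) (hm : x ≤ t m) :
    ∃ i < m, x ∈ Set.Ioc (t i) (t (i + 1)) := by
  induction m with
  | zero => exact absurd (lt_of_lt_of_le h0 hm) (lt_irrefl _)
  | succ n ih =>
    by_cases hc : x ≤ t n
    · obtain ⟨i, hi, h⟩ := ih hc; exact ⟨i, Nat.lt_succ_of_lt hi, h⟩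
    · push_neg at hc; exact ⟨n, Nat.lt_succ_self n, ⟨hc, hm⟩⟩

lemma exists_mem_Ico {m : ℕ} {t : ℕ → ℝ} {x : ℝ} (h0 : t 0 ≤ x) (hm : x < t m) :
    ∃ i < m, x ∈ Set.Ico (t i) (t (i + 1)) := by
  induction m with
  | zero => exact absurd (lt_of_le_of_lt h0 hm) (lt_irrefl _)
  | succ n ih =>
    by_cases hc : x < t n
    · obtain ⟨i, hi, h⟩ := ih hc; exact ⟨i, Nat.lt_succ_of_lt hi, h⟩
    · push_neg at hc; exact ⟨n, Nat.lt_succ_self n, ⟨hc, hm⟩⟩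

lemma step_eval_Ioc {m : ℕ} {t : ℕ → ℝ} (hmono : ∀ {i j : ℕ}, i ≤ j → j ≤ m → t i ≤ t j)
    (c : ℕ → ℝ) {x : ℝ} {k : ℕ} (hk : k < m) (hx : x ∈ Set.Ioc (t k) (t (k + 1))) :
    (∑ i ∈ Finset.range m, (Set.Ioc (t i) (t (i + 1))).indicator (fun _ => c i) x) = c k := by
  rw [Finset.sum_eq_single_of_mem k (Finset.mem_range.mpr hk)]
  · exact Set.indicator_of_mem hx _
  · intro i hi hik
    rw [Finset.mem_range] at hi
    apply Set.indicator_of_notMem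
    intro hxi
    rcases lt_or_gt_of_ne hik with h | h
    · have h2 : t (i + 1) ≤ t k := hmono (Nat.succ_le_of_lt h) hk.le
      exact absurd (hxi.2.trans h2) (not_le.mpr hx.1)
    · have h2 : t (k + 1) ≤ t i := hmono (Nat.succ_le_of_lt h) hi.le
      exact absurd (hx.2.trans h2) (not_le.mpr hxi.1)

lemma step_eval_Ico {m : ℕ} {t : ℕ → ℝ} (hmono : ∀ {i j : ℕ}, i ≤ j → j ≤ m → t i ≤ t j)
    (c : ℕ → ℝ) {x : ℝ} {k : ℕ} (hk : k < m) (hx : x ∈ Set.Ico (t k) (t (k + 1))) :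
    (∑ i ∈ Finset.range m, (Set.Ico (t i) (t (i + 1))).indicator (fun _ => c i) x) = c k := by
  rw [Finset.sum_eq_single_of_mem k (Finset.mem_range.mpr hk)]
  · exact Set.indicator_of_mem hx _
  · intro i hi hik
    rw [Finset.mem_range] at hi
    apply Set.indicator_of_notMem
    intro hxi
    rcases lt_or_gt_of_ne hik with h | h
    · have h2 : t (i + 1) ≤ t k := hmono (Nat.succ_le_of_lt h) hk.le
      exact absurd (lt_of_lt_of_le hxi.2 h2) (not_lt.mpr hx.1)
    · have h2 : t (k + 1) ≤ t i := hmono (Nat.succ_le_of_lt h) hi.le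
      exact absurd (lt_of_lt_of_le hx.2 h2) (not_lt.mpr hxi.1)

lemma step_integrable {μ : Measure ℝ} {S : Set ℝ} {m : ℕ} {A : ℕ → Set ℝ}
    (hA : ∀ i < m, MeasurableSet (A i)) (hfin : ∀ i < m, μ (A i) ≠ ⊤) (c : ℕ → ℝ) :
    Integrable (fun x => ∑ i ∈ Finset.range m, (A i).indicator (fun _ => c i) x)
      (μ.restrict S) := by
  apply MeasureTheory.integrable_finset_sum
  intro i hi
  rw [Finset.mem_range] at hi
  rw [MeasureTheory.integrable_indicator_iff (hA i hi), MeasureTheory.IntegrableOn,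
    MeasureTheory.integrable_const_iff]
  right
  constructor
  calc ((μ.restrict S).restrict (A i)) Set.univ = μ.restrict S (A i) :=
        Measure.restrict_apply_univ _
    _ ≤ μ (A i) := Measure.restrict_apply_le _ _
    _ < ⊤ := lt_top_iff_ne_top.mpr (hfin i hi)

lemma step_integral {μ : Measure ℝ} {S : Set ℝ} (hS : MeasurableSet S) {m : ℕ} {A : ℕ → Set ℝ}
    (hA : ∀ i < m, MeasurableSet (A i)) (hsub : ∀ i < m, A i ⊆ S)
    (hfin : ∀ i < m, μ (A i) ≠ ⊤) (c : ℕ → ℝ) :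
    ∫ x in S, (∑ i ∈ Finset.range m, (A i).indicator (fun _ => c i) x) ∂μ
      = ∑ i ∈ Finset.range m, c i * (μ (A i)).toReal := by
  rw [MeasureTheory.integral_finset_sum]
  · refine Finset.sum_congr rfl fun i hi => ?_
    rw [Finset.mem_range] at hi
    rw [MeasureTheory.integral_indicator_const (c i) (hA i hi),
      measureReal_def, Measure.restrict_apply (hA i hi),
      Set.inter_eq_self_of_subset_left (hsub i hi), smul_eq_mul, mul_comm]
  · intro i hi
    rw [Finset.mem_range] at hi
    rw [MeasureTheory.integrable_indicator_iff (hA i hi), MeasureTheory.IntegrableOn,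
      MeasureTheory.integrable_const_iff]
    right
    constructor
    calc ((μ.restrict S).restrict (A i)) Set.univ = μ.restrict S (A i) :=
          Measure.restrict_apply_univ _
      _ ≤ μ (A i) := Measure.restrict_apply_le _ _
      _ < ⊤ := lt_top_iff_ne_top.mpr (hfin i hi)


lemma exists_hasRS {F G : ℝ → ℝ} (hF : Continuous F) (hG : Monotone G) {a y : ℝ}
    (hay : a < y) : ∃ I, HasRSIntegral F G a y I := by
  classical
  set σ := hG.stieltjesFunction with hσdef
  have hGσ : ∀ x, G x ≤ σ x := fun x => hG.le_rightLim le_rfl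
  have hσG : ∀ {x d : ℝ}, x < d → σ x ≤ G d := fun {x d} h => hG.rightLim_le h
  set lam := σ.measure with hlamdef
  set j : ℝ → ℝ := fun x => σ x - G x with hjdef
  have hj0 : ∀ x, 0 ≤ j x := fun x => sub_nonneg.mpr (hGσ x)
  set B : ℝ := (G (y + 1) - G a) + 1 with hBdef
  have hGay : G a ≤ G (y + 1) := hG (by linarith)
  have hB1 : (1:ℝ) ≤ B := by simp only [hBdef]; linarith
  have hBpos : (0:ℝ) < B := by linarith
  -- F is integrable on (a, y] w.r.t. lam
  have hlam_fin : lam (Set.Ioc a y) < ⊤ := by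
    rw [StieltjesFunction.measure_Ioc]; exact ENNReal.ofReal_lt_top
  have hFi : MeasureTheory.IntegrableOn F (Set.Ioc a y) lam := by
    have h1 : MeasureTheory.IntegrableOn F (Set.Icc a y) lam :=
      (hF.continuousOn).integrableOn_Icc
    exact h1.mono_set Set.Ioc_subset_Icc_self
  set I : ℝ := (∫ x in Set.Ioc a y, F x ∂lam) - F y * j y + F a * j a with hIdef
  refine ⟨I, ?_⟩
  intro ε hε
  set ε' : ℝ := ε / (4 * B + 1) with hε'def
  have hε'pos : 0 < ε' := by positivity
  have hUC : UniformContinuousOn F (Set.Icc a y) :=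
    isCompact_Icc.uniformContinuousOn_of_continuous hF.continuousOn
  rw [Metric.uniformContinuousOn_iff] at hUC
  obtain ⟨δ₀, hδ₀, hδ⟩ := hUC ε' hε'pos
  refine ⟨δ₀ / 2, by positivity, ?_⟩
  rintro m t ξ htp hmesh
  have hmono : ∀ {i j : ℕ}, i ≤ j → j ≤ m → t i ≤ t j := fun hij hjm => tp_le htp hij hjm
  have ht0 : t 0 = a := htp.2.1
  have htm : t m = y := htp.2.2.1
  have hlt : ∀ i < m, t i < t (i + 1) := htp.2.2.2.1
  have hξm : ∀ i < m, ξ i ∈ Set.Icc (t i) (t (i + 1)) := htp.2.2.2.2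
  have htmem : ∀ {i : ℕ}, i ≤ m → t i ∈ Set.Icc a y := fun hi => tp_mem htp hi
  have hξmem : ∀ {i : ℕ}, i < m → ξ i ∈ Set.Icc a y := fun hi => tp_tag_mem htp hi
  -- uniform continuity estimate for tags
  have key : ∀ {u v : ℝ}, u ∈ Set.Icc a y → v ∈ Set.Icc a y → |u - v| < δ₀ →
      |F u - F v| ≤ ε' := by
    intro u v hu hv huv
    have := hδ u hu v hv (by rwa [Real.dist_eq])
    rw [Real.dist_eq] at this
    exact this.le
  -- the step function
  set s : ℝ → ℝ := fun x =>
    ∑ i ∈ Finset.range m, (Set.Ioc (t i) (t (i + 1))).indicator (fun _ => F (ξ i)) x with hsdef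
  have hAsub : ∀ i < m, Set.Ioc (t i) (t (i + 1)) ⊆ Set.Ioc a y := by
    intro i hi
    apply Set.Ioc_subset_Ioc
    · rw [← ht0]; exact hmono (Nat.zero_le i) hi.le
    · rw [← htm]; exact hmono (Nat.succ_le_of_lt hi) le_rfl
  have hAmeas : ∀ i < m, MeasurableSet (Set.Ioc (t i) (t (i + 1))) :=
    fun i _ => measurableSet_Ioc
  have hAfin : ∀ i < m, lam (Set.Ioc (t i) (t (i + 1))) ≠ ⊤ := by
    intro i _
    rw [StieltjesFunction.measure_Ioc]; exact ENNReal.ofReal_ne_top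
  -- identity (2): the first part of the sum is ∫ s
  have id2 : ∑ i ∈ Finset.range m, F (ξ i) * (σ (t (i + 1)) - σ (t i))
      = ∫ x in Set.Ioc a y, s x ∂lam := by
    rw [hsdef, step_integral measurableSet_Ioc hAmeas hAsub hAfin]
    refine Finset.sum_congr rfl fun i hi => ?_
    rw [Finset.mem_range] at hi
    rw [StieltjesFunction.measure_Ioc, ENNReal.toReal_ofReal
      (sub_nonneg.mpr (σ.mono (hlt i hi).le))]
  -- identity (1): decomposition of RSSum
  have id1 : RSSum F G m t ξ = (∑ i ∈ Finset.range m, F (ξ i) * (σ (t (i + 1)) - σ (t i)))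
      - ∑ i ∈ Finset.range m, F (ξ i) * (j (t (i + 1)) - j (t i)) := by
    rw [← Finset.sum_sub_distrib]
    refine Finset.sum_congr rfl fun i _ => ?_
    simp only [hjdef]; ring
  -- bound (3): |∫ s - ∫ F| ≤ ε' * B
  have bound3 : |(∫ x in Set.Ioc a y, s x ∂lam) - ∫ x in Set.Ioc a y, F x ∂lam| ≤ ε' * B := by
    have hsi : MeasureTheory.Integrable s (lam.restrict (Set.Ioc a y)) := by
      rw [hsdef]; exact step_integrable hAmeas hAfin _
    have hintsub : (∫ x in Set.Ioc a y, s x ∂lam) - (∫ x in Set.Ioc a y, F x ∂lam)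
        = ∫ x in Set.Ioc a y, (s x - F x) ∂lam := (MeasureTheory.integral_sub hsi hFi).symm
    rw [hintsub]
    have hb : ∀ x ∈ Set.Ioc a y, ‖s x - F x‖ ≤ ε' := by
      intro x hx
      obtain ⟨k, hk, hxk⟩ := exists_mem_Ioc (t := t) (m := m)
        (by rw [ht0]; exact hx.1) (by rw [htm]; exact hx.2)
      have hsx : s x = F (ξ k) := step_eval_Ioc hmono _ hk hxk
      rw [Real.norm_eq_abs, hsx]
      have hξk := hξm k hk
      have hxm : x ∈ Set.Icc a y := ⟨hx.1.le, hx.2⟩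
      apply key (hξmem hk) hxm
      have hme := hmesh k hk
      have h1 := hξk.1; have h2 := hξk.2
      have h3 := hxk.1; have h4 := hxk.2
      rw [abs_sub_lt_iff]
      constructor <;> linarith
    have := MeasureTheory.norm_setIntegral_le_of_norm_le_const (C := ε') hlam_fin
      hb
    rw [Real.norm_eq_abs] at this
    refine le_trans this ?_
    have htR : (lam (Set.Ioc a y)).toReal = σ y - σ a := by
      rw [StieltjesFunction.measure_Ioc, ENNReal.toReal_ofReal
        (sub_nonneg.mpr (σ.mono hay.le))]
    have h5 : σ y ≤ G (y + 1) := hσG (lt_add_one y)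
    have h6 : G a ≤ σ a := hGσ a
    have h7 : (lam (Set.Ioc a y)).toReal ≤ B := by rw [htR, hBdef]; linarith
    exact mul_le_mul_of_nonneg_left h7 hε'pos.le
  -- Abel + bound (4): |A - (F y * j y - F a * j a)| ≤ 3 * ε' * B
  have bound4 : |(∑ i ∈ Finset.range m, F (ξ i) * (j (t (i + 1)) - j (t i)))
      - (F y * j y - F a * j a)| ≤ 3 * (ε' * B) := by
    obtain ⟨n, rfl⟩ : ∃ n, m = n + 1 := ⟨m - 1, (Nat.succ_pred_eq_of_pos htp.1).symm⟩
    have abel : (∑ i ∈ Finset.range (n + 1), F (ξ i) * (j (t (i + 1)) - j (t i)))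
        = F (ξ n) * j (t (n + 1)) - F (ξ 0) * j (t 0)
          + ∑ i ∈ Finset.range n, (F (ξ i) - F (ξ (i + 1))) * j (t (i + 1)) := by
      have h1 : (∑ i ∈ Finset.range (n + 1), F (ξ i) * (j (t (i + 1)) - j (t i)))
          = (∑ i ∈ Finset.range (n + 1), F (ξ i) * j (t (i + 1)))
            - ∑ i ∈ Finset.range (n + 1), F (ξ i) * j (t i) := by
        rw [← Finset.sum_sub_distrib]
        exact Finset.sum_congr rfl fun i _ => by ring
      have h2 : ∑ i ∈ Finset.range n, (F (ξ i) - F (ξ (i + 1))) * j (t (i + 1))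
          = (∑ i ∈ Finset.range n, F (ξ i) * j (t (i + 1)))
            - ∑ i ∈ Finset.range n, F (ξ (i + 1)) * j (t (i + 1)) := by
        rw [← Finset.sum_sub_distrib]
        exact Finset.sum_congr rfl fun i _ => by ring
      rw [h1, Finset.sum_range_succ (fun i => F (ξ i) * j (t (i + 1))) n,
        Finset.sum_range_succ' (fun i => F (ξ i) * j (t i)) n, h2]
      ring
    rw [abel, htm, ht0]
    have hb1 : |F (ξ n) - F y| ≤ ε' := by
      have hξk := hξm n (Nat.lt_succ_self n)
      have hme := hmesh n (Nat.lt_succ_self n)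
      rw [htm] at hξk
      apply key (hξmem (Nat.lt_succ_self n)) ⟨hay.le, le_rfl⟩
      have h1 := hξk.1; have h2 := hξk.2
      have h3 : t n ≤ y := by rw [← htm]; exact (hlt n (Nat.lt_succ_self n)).le
      rw [htm] at hme
      rw [abs_sub_lt_iff]; constructor <;> linarith
    have hb2 : |F (ξ 0) - F a| ≤ ε' := by
      have hξk := hξm 0 (Nat.succ_pos n)
      have hme := hmesh 0 (Nat.succ_pos n)
      rw [ht0] at hξk hme
      apply key (hξmem (Nat.succ_pos n)) ⟨le_rfl, hay.le⟩
      have h1 := hξk.1; have h2 := hξk.2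
      rw [abs_sub_lt_iff]; constructor <;> linarith
    have hjy : j y ≤ B := by
      have h5 : σ y ≤ G (y + 1) := hσG (lt_add_one y)
      have h6 : G a ≤ G y := hG hay.le
      simp only [hjdef, hBdef]; linarith
    have hja : j a ≤ B := by
      have h5 : σ a ≤ G y := hσG hay
      have h6 : G y ≤ G (y + 1) := hG (by linarith)
      simp only [hjdef, hBdef]; linarith
    have hadj : ∀ i < n, |F (ξ i) - F (ξ (i + 1))| ≤ ε' := by
      intro i hi
      have hξ1 := hξm i (by omega)
      have hξ2 := hξm (i + 1) (by omega)
      have hme1 := hmesh i (by omega)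
      have hme2 := hmesh (i + 1) (by omega)
      apply key (hξmem (by omega)) (hξmem (by omega))
      have h1 := hξ1.1; have h2 := hξ1.2
      have h3 := hξ2.1; have h4 := hξ2.2
      rw [abs_sub_lt_iff]; constructor <;> linarith
    have hsumJ : ∑ i ∈ Finset.range n, j (t (i + 1)) ≤ B := by
      have step : ∀ i ∈ Finset.range n, j (t (i + 1)) ≤ G (t (i + 1 + 1)) - G (t (i + 1)) := by
        intro i hi
        rw [Finset.mem_range] at hi
        have h5 : σ (t (i + 1)) ≤ G (t (i + 1 + 1)) := hσG (hlt (i + 1) (by omega))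
        simp only [hjdef]; linarith
      calc ∑ i ∈ Finset.range n, j (t (i + 1))
          ≤ ∑ i ∈ Finset.range n, (G (t (i + 1 + 1)) - G (t (i + 1))) :=
            Finset.sum_le_sum step
        _ = G (t (n + 1)) - G (t 1) := by
            exact Finset.sum_range_sub (fun k => G (t (k + 1))) n
        _ ≤ B := by
            have h5 : G (t (n + 1)) ≤ G (y + 1) := hG (by rw [htm]; linarith)
            have h6 : G a ≤ G (t 1) := hG (htmem (by omega)).1
            rw [hBdef]; linarith
    have hsum : |∑ i ∈ Finset.range n, (F (ξ i) - F (ξ (i + 1))) * j (t (i + 1))| ≤ ε' * B := by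
      calc |∑ i ∈ Finset.range n, (F (ξ i) - F (ξ (i + 1))) * j (t (i + 1))|
          ≤ ∑ i ∈ Finset.range n, |(F (ξ i) - F (ξ (i + 1))) * j (t (i + 1))| :=
            Finset.abs_sum_le_sum_abs _ _
        _ ≤ ∑ i ∈ Finset.range n, ε' * j (t (i + 1)) := by
            refine Finset.sum_le_sum fun i hi => ?_
            rw [Finset.mem_range] at hi
            rw [abs_mul, abs_of_nonneg (hj0 _)]
            exact mul_le_mul_of_nonneg_right (hadj i hi) (hj0 _)
        _ = ε' * ∑ i ∈ Finset.range n, j (t (i + 1)) := by rw [Finset.mul_sum]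
        _ ≤ ε' * B := mul_le_mul_of_nonneg_left hsumJ hε'pos.le
    calc |F (ξ n) * j y - F (ξ 0) * j a
          + ∑ i ∈ Finset.range n, (F (ξ i) - F (ξ (i + 1))) * j (t (i + 1))
          - (F y * j y - F a * j a)|
        = |(F (ξ n) - F y) * j y - (F (ξ 0) - F a) * j a
          + ∑ i ∈ Finset.range n, (F (ξ i) - F (ξ (i + 1))) * j (t (i + 1))| := by
          congr 1; ring
      _ ≤ |(F (ξ n) - F y) * j y - (F (ξ 0) - F a) * j a|
          + |∑ i ∈ Finset.range n, (F (ξ i) - F (ξ (i + 1))) * j (t (i + 1))| := abs_add_le _ _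
      _ ≤ (|(F (ξ n) - F y) * j y| + |(F (ξ 0) - F a) * j a|) + ε' * B := by
          exact add_le_add (abs_sub _ _) hsum
      _ ≤ (ε' * B + ε' * B) + ε' * B := by
          refine add_le_add (add_le_add ?_ ?_) le_rfl <;>
            rw [abs_mul, abs_of_nonneg (hj0 _)]
          · exact mul_le_mul hb1 hjy (hj0 _) hε'pos.le
          · exact mul_le_mul hb2 hja (hj0 _) hε'pos.le
      _ = 3 * (ε' * B) := by ring
  -- combine
  have comb : RSSum F G m t ξ - I
      = ((∫ x in Set.Ioc a y, s x ∂lam) - ∫ x in Set.Ioc a y, F x ∂lam)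
        - ((∑ i ∈ Finset.range m, F (ξ i) * (j (t (i + 1)) - j (t i)))
          - (F y * j y - F a * j a)) := by
    rw [id1, id2, hIdef]; ring
  calc |RSSum F G m t ξ - I| ≤ ε' * B + 3 * (ε' * B) := by
        rw [comb]
        exact le_trans (abs_sub _ _) (add_le_add bound3 bound4)
    _ = 4 * B * ε' := by ring
    _ < (4 * B + 1) * ε' := by nlinarith
    _ = ε := by rw [hε'def]; field_simp


lemma variation_small {f : ℝ → ℝ} {a b : ℝ} (hf_cont : ContinuousOn f (Set.Icc a b))
    (hf_bv : BoundedVariationOn f (Set.Icc a b)) {x : ℝ} (hxa : a ≤ x) (hxb : x < b)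
    {ε : ℝ} (hε : 0 < ε) :
    ∃ d, x < d ∧ d ≤ b ∧ (eVariationOn f (Set.Icc x d)).toReal ≤ ε := by
  classical
  have hVbfin : eVariationOn f (Set.Icc x b) ≠ ⊤ := by
    refine ne_top_of_le_ne_top hf_bv (eVariationOn.mono f ?_)
    exact Set.Icc_subset_Icc hxa le_rfl
  set εh : ℝ≥0∞ := ENNReal.ofReal (ε / 2) with hεhdef
  have hεh0 : εh ≠ 0 := by
    simp only [hεhdef, ne_eq, ENNReal.ofReal_eq_zero, not_le]; linarith
  by_cases hVbsmall : eVariationOn f (Set.Icc x b) ≤ εh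
  · refine ⟨b, hxb, le_rfl, ?_⟩
    refine le_trans (ENNReal.toReal_le_of_le_ofReal (by linarith) ?_) (by linarith)
    exact le_trans hVbsmall (ENNReal.ofReal_le_ofReal (by linarith))
  push_neg at hVbsmall
  have hVb0 : eVariationOn f (Set.Icc x b) ≠ 0 :=
    fun h => by rw [h] at hVbsmall; exact absurd (zero_le : (0:ℝ≥0∞) ≤ εh) (not_le.mpr hVbsmall)
  have hlt : eVariationOn f (Set.Icc x b) - εh < eVariationOn f (Set.Icc x b) :=
    ENNReal.sub_lt_self hVbfin hVb0 hεh0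
  rw [eVariationOn] at hlt
  obtain ⟨⟨N, u, hu, hus⟩, hsum⟩ := lt_iSup_iff.mp hlt
  simp only at hsum
  -- continuity at x within Icc a b
  have hcx : ContinuousWithinAt f (Set.Icc a b) x := hf_cont x ⟨hxa, hxb.le⟩
  rw [Metric.continuousWithinAt_iff] at hcx
  obtain ⟨δ, hδpos, hδ⟩ := hcx (ε / 4) (by linarith)
  set P : Finset ℕ := (Finset.range (N + 1)).filter (fun i => x < u i) with hPdef
  by_cases hP : P.Nonempty
  · set i0 := P.min' hP with hi0def
    have hi0P : i0 ∈ P := P.min'_mem hP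
    have hi0x : x < u i0 := (Finset.mem_filter.mp hi0P).2
    set d : ℝ := min (u i0) (x + δ / 2) with hddef
    have hdx : x < d := lt_min hi0x (by linarith)
    have hdb : d ≤ b := le_trans (min_le_left _ _) (hus i0).2
    have hdmem : d ∈ Set.Icc a b := ⟨le_trans hxa hdx.le, hdb⟩
    have hdclose : edist (f d) (f x) ≤ ENNReal.ofReal (ε / 4) := by
      rw [edist_dist]
      apply ENNReal.ofReal_le_ofReal
      refine (hδ hdmem ?_).le
      rw [Real.dist_eq, abs_of_pos (by linarith : (0:ℝ) < d - x)]
      calc d - x ≤ x + δ / 2 - x := by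
            have := min_le_right (u i0) (x + δ / 2); linarith
        _ < δ := by linarith
    have hlow : ∀ i, i ≤ N → i < i0 → u i = x := by
      intro i hiN hii0
      have : i ∉ P := fun hmem => absurd (P.min'_le i hmem) (not_le.mpr hii0)
      rw [hPdef, Finset.mem_filter] at this
      push_neg at this
      exact le_antisymm (this (Finset.mem_range.mpr (Nat.lt_succ_of_le hiN))) (hus i).1
    have hhigh : ∀ i, i0 ≤ i → d ≤ u i := by
      intro i hi
      exact le_trans (min_le_left _ _) (hu hi)
    set v : ℕ → ℝ := fun i => max (u i) d with hvdef
    have hv : Monotone v := fun i j hij => max_le_max (hu hij) le_rfl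
    have hvs : ∀ i, v i ∈ Set.Icc d b := fun i => ⟨le_max_right _ _, max_le (hus i).2 hdb⟩
    have hSv := eVariationOn.sum_le (f := f) (n := N) hv hvs
    -- per-index comparison
    have hterm : ∀ i ∈ Finset.range N,
        edist (f (u (i + 1))) (f (u i))
          ≤ edist (f (v (i + 1))) (f (v i)) + (if i + 1 = i0 then edist (f d) (f x) else 0) := by
      intro i hi
      rw [Finset.mem_range] at hi
      rcases lt_trichotomy (i + 1) i0 with h | h | h
      · have h1 : u (i + 1) = x := hlow _ hi h
        have h2 : u i = x := hlow _ (by omega) (by omega)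
        rw [h1, h2, edist_self]
        exact zero_le
      · have h2 : u i = x := hlow _ (by omega) (by omega)
        have h3 : d ≤ u (i + 1) := hhigh _ (by omega)
        have hv1 : v (i + 1) = u (i + 1) := max_eq_left h3
        have hv2 : v i = d := by rw [hvdef]; simp only; rw [h2]; exact max_eq_right hdx.le
        rw [h2, hv1, hv2, if_pos h]
        exact edist_triangle _ _ _
      · have h3 : d ≤ u i := hhigh _ (by omega)
        have h4 : d ≤ u (i + 1) := hhigh _ (by omega)
        have hv1 : v (i + 1) = u (i + 1) := max_eq_left h4
        have hv2 : v i = u i := max_eq_left h3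
        rw [hv1, hv2, if_neg (by omega), add_zero]
    have hite : ∑ i ∈ Finset.range N, (if i + 1 = i0 then edist (f d) (f x) else 0)
        ≤ edist (f d) (f x) := by
      rcases Nat.eq_zero_or_pos i0 with h0 | h0
      · rw [Finset.sum_eq_zero (fun i _ => by rw [if_neg (by omega)])]
        exact zero_le
      · obtain ⟨k, hk⟩ : ∃ k, i0 = k + 1 := ⟨i0 - 1, by omega⟩
        have he : ∀ i : ℕ, (i + 1 = i0) = (i = k) := fun i => by
          rw [hk]; simp [Nat.add_right_cancel_iff]
        simp only [he]
        rw [Finset.sum_ite_eq' (Finset.range N) k (fun _ => edist (f d) (f x))]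
        split <;> simp
    have hcomp : ∑ i ∈ Finset.range N, edist (f (u (i + 1))) (f (u i))
        ≤ eVariationOn f (Set.Icc d b) + edist (f d) (f x) := by
      calc ∑ i ∈ Finset.range N, edist (f (u (i + 1))) (f (u i))
          ≤ ∑ i ∈ Finset.range N, (edist (f (v (i + 1))) (f (v i))
            + (if i + 1 = i0 then edist (f d) (f x) else 0)) := Finset.sum_le_sum hterm
        _ = (∑ i ∈ Finset.range N, edist (f (v (i + 1))) (f (v i)))
            + ∑ i ∈ Finset.range N, (if i + 1 = i0 then edist (f d) (f x) else 0) :=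
            Finset.sum_add_distrib
        _ ≤ eVariationOn f (Set.Icc d b) + edist (f d) (f x) := add_le_add hSv hite
    -- combine
    have hsplit : eVariationOn f (Set.Icc x d) + eVariationOn f (Set.Icc d b)
        = eVariationOn f (Set.Icc x b) := by
      have := eVariationOn.Icc_add_Icc f (s := Set.univ) hdx.le hdb (Set.mem_univ d)
      simpa using this
    have hVdfin : eVariationOn f (Set.Icc d b) ≠ ⊤ := by
      refine ne_top_of_le_ne_top hf_bv (eVariationOn.mono f ?_)
      exact Set.Icc_subset_Icc (le_trans hxa hdx.le) le_rfl
    have hfinal : eVariationOn f (Set.Icc x d) ≤ ENNReal.ofReal (3 * ε / 4) := by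
      have h1 : eVariationOn f (Set.Icc x b) - εh
          ≤ eVariationOn f (Set.Icc d b) + edist (f d) (f x) := le_trans hsum.le hcomp
      have h2 : eVariationOn f (Set.Icc x b)
          ≤ eVariationOn f (Set.Icc d b) + edist (f d) (f x) + εh := by
        rw [← tsub_le_iff_right]; exact h1
      have h3 : eVariationOn f (Set.Icc x d)
          ≤ edist (f d) (f x) + εh := by
        rw [← hsplit] at h2
        have h2' : eVariationOn f (Set.Icc d b) + eVariationOn f (Set.Icc x d)
            ≤ eVariationOn f (Set.Icc d b) + (edist (f d) (f x) + εh) := by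
          calc eVariationOn f (Set.Icc d b) + eVariationOn f (Set.Icc x d)
              = eVariationOn f (Set.Icc x d) + eVariationOn f (Set.Icc d b) := add_comm _ _
            _ ≤ eVariationOn f (Set.Icc d b) + edist (f d) (f x) + εh := h2
            _ = eVariationOn f (Set.Icc d b) + (edist (f d) (f x) + εh) := add_assoc _ _ _
        exact (ENNReal.add_le_add_iff_left hVdfin).mp h2'
      refine le_trans h3 ?_
      calc edist (f d) (f x) + εh ≤ ENNReal.ofReal (ε / 4) + ENNReal.ofReal (ε / 2) :=
            add_le_add hdclose le_rfl
        _ = ENNReal.ofReal (ε / 4 + ε / 2) := (ENNReal.ofReal_add (by linarith) (by linarith)).symm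
        _ ≤ ENNReal.ofReal (3 * ε / 4) := by apply ENNReal.ofReal_le_ofReal; linarith
    refine ⟨d, hdx, hdb, ?_⟩
    refine le_trans (ENNReal.toReal_le_of_le_ofReal (by linarith) hfinal) (by linarith)
  · -- P empty: the approximating sum is zero, contradiction
    exfalso
    have hzero : ∀ i, i ≤ N → u i = x := by
      intro i hiN
      have : i ∉ P := fun h => hP ⟨i, h⟩
      rw [hPdef, Finset.mem_filter] at this
      push_neg at this
      exact le_antisymm (this (Finset.mem_range.mpr (Nat.lt_succ_of_le hiN))) (hus i).1
    have : ∑ i ∈ Finset.range N, edist (f (u (i + 1))) (f (u i)) = 0 := by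
      refine Finset.sum_eq_zero fun i hi => ?_
      rw [Finset.mem_range] at hi
      rw [hzero _ (by omega), hzero _ (by omega), edist_self]
    rw [this] at hsum
    exact absurd hsum (not_lt.mpr zero_le)

end RSAux

open RSAux

/-- core of the proof of Theorem 3: if `∫_a^y f dg ≤ 0` for all `y ∈ (a,b]`,
then `f y · g y ≤ ∫_{[a,y)} f g dμ` for all `y ∈ (a,b]` (where `μ = f⁻¹ · ν` and `ν` is the
variation measure of `f`), and consequently `g` vanishes identically on `[a, b]`. -/
theorem stmt_19 (a b : ℝ) (hab : a ≤ b) (f g : ℝ → ℝ)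
    (hf_cont : ContinuousOn f (Set.Icc a b))
    (hf_pos : ∀ x ∈ Set.Icc a b, 0 < f x)
    (hf_bv : BoundedVariationOn f (Set.Icc a b))
    (hg_nonneg : ∀ x ∈ Set.Icc a b, 0 ≤ g x)
    (hg_bv : BoundedVariationOn g (Set.Icc a b))
    (hga : g a = 0)
    (ν : MeasureTheory.Measure ℝ) [MeasureTheory.IsFiniteMeasure ν]
    (hν_supp : ν (Set.Icc a b)ᶜ = 0)
    (hν : ∀ c d : ℝ, a ≤ c → c < d → d ≤ b →
      ν (Set.Ico c d) = ENNReal.ofReal (eVariationOn f (Set.Icc c d)).toReal)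
    (μ : MeasureTheory.Measure ℝ)
    (hμ : μ = ν.withDensity fun x => ENNReal.ofReal (f x)⁻¹)
    (h_neg : ∀ y ∈ Set.Ioc a b, RSIntegral f g a y ≤ 0) :
    (∀ y ∈ Set.Ioc a b, f y * g y ≤ ∫ x in Set.Ico a y, f x * g x ∂μ) ∧
      ∀ x ∈ Set.Icc a b, g x = 0 := by

  classical
  rcases eq_or_lt_of_le hab with rfl | haltb
  · constructor
    · rintro y ⟨h1, h2⟩; exact absurd (lt_of_lt_of_le h1 h2) (lt_irrefl _)
    · rintro x ⟨h1, h2⟩; rw [le_antisymm h2 h1]; exact hga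
  -- ## setup: continuous/monotone extensions
  set proj : ℝ → ℝ := fun x => min b (max a x) with hprojdef
  have hproj_mem : ∀ x, proj x ∈ Set.Icc a b :=
    fun x => ⟨le_min hab (le_max_left a x), min_le_left _ _⟩
  have hproj_eq : ∀ x ∈ Set.Icc a b, proj x = x := by
    intro x hx
    rw [hprojdef]
    simp only
    rw [max_eq_right hx.1, min_eq_right hx.2]
  have hproj_cont : Continuous proj :=
    continuous_const.min (continuous_const.max continuous_id)
  have hproj_mono : Monotone proj :=
    fun u v huv => min_le_min le_rfl (max_le_max le_rfl huv)
  set F : ℝ → ℝ := fun x => f (proj x) with hFdef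
  have hF_cont : Continuous F := hf_cont.comp_continuous hproj_cont hproj_mem
  have hF_eq : ∀ x ∈ Set.Icc a b, F x = f x := fun x hx => by
    rw [hFdef]; simp only; rw [hproj_eq x hx]
  have hF_pos : ∀ x, 0 < F x := fun x => hf_pos _ (hproj_mem x)
  obtain ⟨p, q, hp, hq, hgpq⟩ :=
    hg_bv.locallyBoundedVariationOn.exists_monotoneOn_sub_monotoneOn
  set P : ℝ → ℝ := fun x => p (proj x) with hPdef
  set Q : ℝ → ℝ := fun x => q (proj x) with hQdef
  have hP_mono : Monotone P := fun u v huv => hp (hproj_mem u) (hproj_mem v) (hproj_mono huv)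
  have hQ_mono : Monotone Q := fun u v huv => hq (hproj_mem u) (hproj_mem v) (hproj_mono huv)
  set Gt : ℝ → ℝ := fun x => P x - Q x with hGtdef
  have hGt_eq : ∀ x ∈ Set.Icc a b, Gt x = g x := by
    intro x hx
    rw [hGtdef]
    simp only [hPdef, hQdef]
    rw [hproj_eq x hx, hgpq]
    simp [Pi.sub_apply]
  have hGt_meas : Measurable Gt := hP_mono.measurable.sub hQ_mono.measurable
  -- ## bounds
  obtain ⟨Mf, hMf⟩ : ∃ Mf : ℝ, ∀ x, |F x| ≤ Mf := by
    obtain ⟨C, hC⟩ := isCompact_Icc.exists_bound_of_continuousOn hf_cont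
    exact ⟨C, fun x => by
      have := hC (proj x) (hproj_mem x); rwa [Real.norm_eq_abs] at this⟩
  obtain ⟨Mg, hMg⟩ : ∃ Mg : ℝ, ∀ x, |Gt x| ≤ Mg := by
    refine ⟨|p a| + |p b| + |q a| + |q b|, fun x => ?_⟩
    have h1 : p a ≤ p (proj x) := hp ⟨le_rfl, hab⟩ (hproj_mem x) (hproj_mem x).1
    have h2 : p (proj x) ≤ p b := hp (hproj_mem x) ⟨hab, le_rfl⟩ (hproj_mem x).2
    have h3 : q a ≤ q (proj x) := hq ⟨le_rfl, hab⟩ (hproj_mem x) (hproj_mem x).1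
    have h4 : q (proj x) ≤ q b := hq (hproj_mem x) ⟨hab, le_rfl⟩ (hproj_mem x).2
    rw [hGtdef]
    simp only [hPdef, hQdef]
    rw [abs_le]
    constructor <;>
      [ (nlinarith [neg_abs_le (p a), le_abs_self (p b), neg_abs_le (q a), le_abs_self (q b),
          abs_nonneg (p a), abs_nonneg (p b), abs_nonneg (q a), abs_nonneg (q b)]);
        (nlinarith [neg_abs_le (p a), le_abs_self (p b), neg_abs_le (q a), le_abs_self (q b),
          abs_nonneg (p a), abs_nonneg (p b), abs_nonneg (q a), abs_nonneg (q b)])]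
  -- ## atoms of ν vanish on [a, b)
  have hatom : ∀ x ∈ Set.Ico a b, ν {x} = 0 := by
    rintro x ⟨hxa, hxb⟩
    by_contra h0
    have hfin := measure_ne_top ν {x}
    have hpos : 0 < (ν {x}).toReal := ENNReal.toReal_pos h0 hfin
    obtain ⟨d, hd1, hd2, hd3⟩ := variation_small hf_cont hf_bv hxa hxb
      (show 0 < (ν {x}).toReal / 2 by linarith)
    have hle : ν {x} ≤ ENNReal.ofReal ((ν {x}).toReal / 2) := by
      calc ν {x} ≤ ν (Set.Ico x d) :=
            measure_mono (Set.singleton_subset_iff.mpr ⟨le_rfl, hd1⟩)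
        _ = ENNReal.ofReal (eVariationOn f (Set.Icc x d)).toReal := hν x d hxa hd1 hd2
        _ ≤ ENNReal.ofReal ((ν {x}).toReal / 2) := ENNReal.ofReal_le_ofReal hd3
    have hcon : ν {x} < ν {x} := by
      refine lt_of_le_of_lt hle ?_
      conv_rhs => rw [← ENNReal.ofReal_toReal hfin]
      rw [ENNReal.ofReal_lt_ofReal_iff hpos]
      linarith
    exact absurd hcon (lt_irrefl _)
  have hnull : ∀ E : Set ℝ, E.Countable → E ⊆ Set.Ico a b → ν E = 0 := by
    intro E hE hsub
    rw [measure_null_iff_singleton hE]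
    exact fun x hx => hatom x (hsub hx)
  -- ## density rewrite
  set dens : ℝ → ℝ≥0 := fun x => Real.toNNReal (F x)⁻¹ with hdensdef
  have hdens_meas : Measurable dens := hF_cont.measurable.inv.real_toNNReal
  have hμ' : μ = ν.withDensity (fun x => (dens x : ℝ≥0∞)) := by
    rw [hμ]
    apply MeasureTheory.withDensity_congr_ae
    rw [Filter.EventuallyEq, MeasureTheory.ae_iff]
    refine measure_mono_null ?_ hν_supp
    intro x hx
    simp only [Set.mem_setOf_eq] at hx
    intro hmem
    apply hx
    rw [hdensdef]
    simp only
    rw [hF_eq x hmem]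
    rfl
  -- ## μ is finite
  obtain ⟨x₀, hx₀mem, hx₀min⟩ :=
    isCompact_Icc.exists_isMinOn (Set.nonempty_Icc.mpr hab) hf_cont
  rw [isMinOn_iff] at hx₀min
  have hm₀ : 0 < f x₀ := hf_pos _ hx₀mem
  have hdens_le : ∀ x, ((dens x : ℝ≥0∞)) ≤ ENNReal.ofReal (f x₀)⁻¹ := by
    intro x
    have h1 : f x₀ ≤ F x := hx₀min _ (hproj_mem x)
    have h2 : (F x)⁻¹ ≤ (f x₀)⁻¹ := inv_anti₀ hm₀ h1
    calc ((dens x : ℝ≥0∞)) = ENNReal.ofReal (F x)⁻¹ := rfl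
      _ ≤ ENNReal.ofReal (f x₀)⁻¹ := ENNReal.ofReal_le_ofReal h2
  haveI hμfin : MeasureTheory.IsFiniteMeasure μ := by
    constructor
    rw [hμ', MeasureTheory.withDensity_apply _ MeasurableSet.univ, Measure.restrict_univ]
    calc ∫⁻ x, (dens x : ℝ≥0∞) ∂ν ≤ ∫⁻ _, ENNReal.ofReal (f x₀)⁻¹ ∂ν :=
          MeasureTheory.lintegral_mono hdens_le
      _ = ENNReal.ofReal (f x₀)⁻¹ * ν Set.univ := MeasureTheory.lintegral_const _
      _ < ⊤ := ENNReal.mul_lt_top ENNReal.ofReal_lt_top (measure_lt_top ν _)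
  have hμac : ∀ {E : Set ℝ}, ν E = 0 → μ E = 0 := by
    intro E hE
    rw [hμ']
    exact MeasureTheory.withDensity_absolutelyContinuous ν _ hE
  -- ## the auxiliary integrand
  set ut : ℝ → ℝ := fun x => F x * Gt x with hutdef
  have hut_meas : Measurable ut := hF_cont.measurable.mul hGt_meas
  have hut_eq : ∀ x ∈ Set.Icc a b, ut x = f x * g x := fun x hx => by
    rw [hutdef]; simp only; rw [hF_eq x hx, hGt_eq x hx]
  have hMfg : ∀ x, |ut x| ≤ |Mf * Mg| := by
    intro x
    rw [hutdef]
    simp only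
    rw [abs_mul]
    refine le_trans (mul_le_mul (hMf x) (hMg x) (abs_nonneg _)
      (le_trans (abs_nonneg (F x)) (hMf x))) (le_abs_self _)
  have hut_int : MeasureTheory.Integrable ut μ := by
    refine (MeasureTheory.integrable_const (|Mf * Mg|)).mono'
      hut_meas.aestronglyMeasurable ?_
    exact Filter.Eventually.of_forall fun x => by rw [Real.norm_eq_abs]; exact hMfg x
  have hae : (fun x => f x * g x) =ᵐ[μ] ut := by
    rw [Filter.EventuallyEq, MeasureTheory.ae_iff]
    refine hμac (measure_mono_null ?_ hν_supp)
    intro x hx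
    simp only [Set.mem_setOf_eq] at hx
    exact fun hmem => hx (hut_eq x hmem).symm
  -- ## Goal 1
  have key1 : ∀ y ∈ Set.Ioc a b, f y * g y ≤ ∫ x in Set.Ico a y, f x * g x ∂μ := by
    rintro y ⟨hay, hyb⟩
    have hIccsub : Set.Icc a y ⊆ Set.Icc a b := Set.Icc_subset_Icc le_rfl hyb
    -- the RS integral exists and is ≤ 0
    obtain ⟨IP, hIP⟩ := exists_hasRS hF_cont hP_mono hay
    obtain ⟨IQ, hIQ⟩ := exists_hasRS hF_cont hQ_mono hay
    have hIpq : HasRSIntegral F (P - Q) a y (IP - IQ) := HasRSIntegral.sub hIP hIQ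
    have hfF : ∀ x ∈ Set.Icc a y, F x = f x := fun x hx => hF_eq x (hIccsub hx)
    have hgG : ∀ x ∈ Set.Icc a y, (P - Q) x = g x := by
      intro x hx
      rw [Pi.sub_apply]
      have hh := hGt_eq x (hIccsub hx)
      rw [hGtdef] at hh
      simpa using hh
    have hI : HasRSIntegral f g a y (IP - IQ) :=
      HasRSIntegral_congr hfF hgG hIpq
    have hIneg : IP - IQ ≤ 0 := by
      rw [← RSIntegral_eq hay hI]
      exact h_neg y ⟨hay, hyb⟩
    -- convergence of Riemann-Stieltjes sums over uniform left-tagged partitions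
    have hconv1 : Tendsto (fun n => RSSum f g n (up a y n) (up a y n)) atTop
        (nhds (IP - IQ)) := by
      rw [Metric.tendsto_atTop]
      intro ε hε
      obtain ⟨δ, hδ, H⟩ := hI ε hε
      refine ⟨Nat.ceil ((y - a) / δ) + 1, fun n hn => ?_⟩
      have hn0 : 0 < n := lt_of_lt_of_le (Nat.succ_pos _) hn
      have hnR : (y - a) / δ < n := by
        calc (y - a) / δ ≤ (Nat.ceil ((y - a) / δ) : ℝ) := Nat.le_ceil _
          _ < n := by exact_mod_cast Nat.lt_of_lt_of_le (Nat.lt_succ_self _) hn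
      have hmesh : (y - a) / n < δ := by
        have hnpos : (0:ℝ) < n := by exact_mod_cast hn0
        rw [div_lt_iff₀ hnpos]
        rw [div_lt_iff₀ hδ] at hnR
        linarith [mul_comm δ (n:ℝ)]
      rw [Real.dist_eq]
      exact H n _ _ (up_tagged hay hn0) (fun i _ => by rw [up_step]; exact hmesh)
    -- the step functions
    set sn : ℕ → ℝ → ℝ := fun n x => ∑ i ∈ Finset.range n,
      (Set.Ico (up a y n i) (up a y n (i + 1))).indicator
        (fun _ => Gt (up a y n (i + 1))) x with hsndef
    have hupmono : ∀ n : ℕ, ∀ {i j : ℕ}, i ≤ j → j ≤ n → up a y n i ≤ up a y n j := by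
      intro n i j hij _
      have hstep : (0:ℝ) ≤ (y - a) / n := div_nonneg (by linarith) (Nat.cast_nonneg n)
      have : (i:ℝ) ≤ j := by exact_mod_cast hij
      simp only [up]
      nlinarith
    -- per-n inequality
    have hkey : ∀ n : ℕ, 1 ≤ n →
        f y * g y - RSSum f g n (up a y n) (up a y n) ≤ ∫ x in Set.Ico a y, sn n x ∂ν := by
      intro n hn1
      have hn0 : 0 < n := hn1
      have htp := up_tagged hay hn0
      have ht0 : up a y n 0 = a := htp.2.1
      have htn : up a y n n = y := htp.2.2.1
      have tele : ∑ i ∈ Finset.range n,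
          (f (up a y n (i + 1)) * g (up a y n (i + 1)) - f (up a y n i) * g (up a y n i))
          = f (up a y n n) * g (up a y n n) - f (up a y n 0) * g (up a y n 0) :=
        Finset.sum_range_sub (fun k => f (up a y n k) * g (up a y n k)) n
      have e1 : f y * g y - RSSum f g n (up a y n) (up a y n)
          = ∑ i ∈ Finset.range n, g (up a y n (i + 1)) * (f (up a y n (i + 1)) - f (up a y n i)) := by
        have hfy : f y * g y = ∑ i ∈ Finset.range n,
            (f (up a y n (i + 1)) * g (up a y n (i + 1)) - f (up a y n i) * g (up a y n i)) := by
          rw [tele, ht0, htn, hga]; ring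
        rw [hfy, RSSum, ← Finset.sum_sub_distrib]
        exact Finset.sum_congr rfl fun i _ => by ring
      have e2 : ∀ i ∈ Finset.range n,
          g (up a y n (i + 1)) * (f (up a y n (i + 1)) - f (up a y n i))
            ≤ Gt (up a y n (i + 1)) * (ν (Set.Ico (up a y n i) (up a y n (i + 1)))).toReal := by
        intro i hi
        rw [Finset.mem_range] at hi
        have hTi : up a y n i ∈ Set.Icc a y := tp_mem htp hi.le
        have hTi1 : up a y n (i + 1) ∈ Set.Icc a y := tp_mem htp (Nat.succ_le_of_lt hi)
        have hTib : up a y n (i + 1) ∈ Set.Icc a b := ⟨hTi1.1, hTi1.2.trans hyb⟩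
        have hg1 : 0 ≤ g (up a y n (i + 1)) := hg_nonneg _ hTib
        have hνIco := hν (up a y n i) (up a y n (i + 1)) hTi.1 (htp.2.2.2.1 i hi)
          (hTi1.2.trans hyb)
        have hVfin : eVariationOn f (Set.Icc (up a y n i) (up a y n (i + 1))) ≠ ⊤ :=
          ne_top_of_le_ne_top hf_bv (eVariationOn.mono f
            (Set.Icc_subset_Icc hTi.1 (hTi1.2.trans hyb)))
        have hdist : f (up a y n (i + 1)) - f (up a y n i)
            ≤ (ν (Set.Ico (up a y n i) (up a y n (i + 1)))).toReal := by
          rw [hνIco, ENNReal.toReal_ofReal ENNReal.toReal_nonneg]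
          have hedist := eVariationOn.edist_le f
            (show up a y n (i + 1) ∈ Set.Icc (up a y n i) (up a y n (i + 1)) from
              ⟨(htp.2.2.2.1 i hi).le, le_rfl⟩)
            (show up a y n i ∈ Set.Icc (up a y n i) (up a y n (i + 1)) from
              ⟨le_rfl, (htp.2.2.2.1 i hi).le⟩)
          have hd : dist (f (up a y n (i + 1))) (f (up a y n i))
              ≤ (eVariationOn f (Set.Icc (up a y n i) (up a y n (i + 1)))).toReal := by
            rw [dist_edist]
            exact ENNReal.toReal_mono hVfin hedist
          calc f (up a y n (i + 1)) - f (up a y n i)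
              ≤ |f (up a y n (i + 1)) - f (up a y n i)| := le_abs_self _
            _ = dist (f (up a y n (i + 1))) (f (up a y n i)) := (Real.dist_eq _ _).symm
            _ ≤ _ := hd
        calc g (up a y n (i + 1)) * (f (up a y n (i + 1)) - f (up a y n i))
            ≤ g (up a y n (i + 1)) * (ν (Set.Ico (up a y n i) (up a y n (i + 1)))).toReal :=
              mul_le_mul_of_nonneg_left hdist hg1
          _ = Gt (up a y n (i + 1)) * (ν (Set.Ico (up a y n i) (up a y n (i + 1)))).toReal := by
              rw [hGt_eq _ hTib]
      have e3 : ∫ x in Set.Ico a y, sn n x ∂ν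
          = ∑ i ∈ Finset.range n,
            Gt (up a y n (i + 1)) * (ν (Set.Ico (up a y n i) (up a y n (i + 1)))).toReal := by
        refine step_integral measurableSet_Ico (fun i _ => measurableSet_Ico)
          (fun i hi => ?_) (fun i _ => measure_ne_top ν _) _
        exact Set.Ico_subset_Ico (tp_mem htp hi.le).1 (tp_mem htp (Nat.succ_le_of_lt hi)).2
      calc f y * g y - RSSum f g n (up a y n) (up a y n)
          = ∑ i ∈ Finset.range n, g (up a y n (i + 1)) * (f (up a y n (i + 1)) - f (up a y n i)) := e1
        _ ≤ ∑ i ∈ Finset.range n,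
            Gt (up a y n (i + 1)) * (ν (Set.Ico (up a y n i) (up a y n (i + 1)))).toReal :=
            Finset.sum_le_sum e2
        _ = ∫ x in Set.Ico a y, sn n x ∂ν := e3.symm
    -- dominated convergence
    have hconv2 : Tendsto (fun n => ∫ x in Set.Ico a y, sn n x ∂ν) atTop
        (nhds (∫ x in Set.Ico a y, Gt x ∂ν)) := by
      have hDcount : Set.Countable ({x | ¬ContinuousAt P x} ∪ {x | ¬ContinuousAt Q x}) :=
        hP_mono.countable_not_continuousAt.union hQ_mono.countable_not_continuousAt
      have hDnull : (ν.restrict (Set.Ico a y))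
          ({x | ¬ContinuousAt P x} ∪ {x | ¬ContinuousAt Q x}) = 0 := by
        rw [Measure.restrict_apply' measurableSet_Ico]
        refine hnull _ (hDcount.mono Set.inter_subset_left) ?_
        exact fun x hx => ⟨hx.2.1, lt_of_lt_of_le hx.2.2 hyb⟩
      refine MeasureTheory.tendsto_integral_of_dominated_convergence (bound := fun _ => Mg)
        (fun n => ?_) ?_ (fun n => ?_) ?_
      · refine (Finset.measurable_sum _ fun i _ => ?_).aestronglyMeasurable
        exact measurable_const.indicator measurableSet_Ico
      · exact MeasureTheory.integrable_const Mg
      · refine Filter.Eventually.of_forall fun x => ?_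
        rw [Real.norm_eq_abs]
        by_cases hc : ∃ i, i < n ∧ x ∈ Set.Ico (up a y n i) (up a y n (i + 1))
        · obtain ⟨i, hi, hxi⟩ := hc
          rw [hsndef]
          simp only
          rw [step_eval_Ico (hupmono n) _ hi hxi]
          exact hMg _
        · push_neg at hc
          have hz : sn n x = 0 := Finset.sum_eq_zero fun i hi =>
            Set.indicator_of_notMem (hc i (Finset.mem_range.mp hi)) _
          rw [hz, abs_zero]
          exact le_trans (abs_nonneg (Gt 0)) (hMg 0)
      · have hae1 := MeasureTheory.ae_restrict_mem (μ := ν) (s := Set.Ico a y) measurableSet_Ico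
        have hae2 : ∀ᵐ x ∂ν.restrict (Set.Ico a y),
            x ∉ ({x | ¬ContinuousAt P x} ∪ {x | ¬ContinuousAt Q x}) := by
          rw [MeasureTheory.ae_iff]
          refine measure_mono_null (fun x hx => ?_) hDnull
          exact not_not.mp hx
        filter_upwards [hae1, hae2] with x hx hxD
        have hPc : ContinuousAt P x := by
          by_contra hcc; exact hxD (Or.inl hcc)
        have hQc : ContinuousAt Q x := by
          by_contra hcc; exact hxD (Or.inr hcc)
        have hGc : ContinuousAt Gt x := hPc.sub hQc
        rw [Metric.tendsto_atTop]
        intro ε hε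
        rw [Metric.continuousAt_iff] at hGc
        obtain ⟨δ, hδ, hGδ⟩ := hGc ε hε
        refine ⟨Nat.ceil ((y - a) / δ) + 1, fun n hn => ?_⟩
        have hn0 : 0 < n := lt_of_lt_of_le (Nat.succ_pos _) hn
        have hnR : (y - a) / δ < n := by
          calc (y - a) / δ ≤ (Nat.ceil ((y - a) / δ) : ℝ) := Nat.le_ceil _
            _ < n := by exact_mod_cast Nat.lt_of_lt_of_le (Nat.lt_succ_self _) hn
        have hnpos : (0:ℝ) < n := by exact_mod_cast hn0
        have hmesh : (y - a) / n < δ := by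
          rw [div_lt_iff₀ hnpos]
          rw [div_lt_iff₀ hδ] at hnR
          linarith [mul_comm δ (n:ℝ)]
        have htp := up_tagged hay hn0
        obtain ⟨i, hi, hxi⟩ := exists_mem_Ico (t := up a y n) (m := n) (x := x)
          (by rw [htp.2.1]; exact hx.1) (by rw [htp.2.2.1]; exact hx.2)
        have hev : sn n x = Gt (up a y n (i + 1)) := step_eval_Ico (hupmono n) _ hi hxi
        rw [hev]
        apply hGδ
        rw [Real.dist_eq]
        have hstep := up_step a y n i
        have h1 := hxi.1
        have h2 := hxi.2
        rw [abs_sub_lt_iff]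
        constructor <;> linarith
    -- pass to the limit
    have hlim : f y * g y - (IP - IQ) ≤ ∫ x in Set.Ico a y, Gt x ∂ν := by
      refine le_of_tendsto_of_tendsto (tendsto_const_nhds.sub hconv1) hconv2 ?_
      filter_upwards [Filter.eventually_ge_atTop 1] with n hn
      exact hkey n hn
    -- identify the μ-integral
    have hμint : ∫ x in Set.Ico a y, f x * g x ∂μ = ∫ x in Set.Ico a y, Gt x ∂ν := by
      have hres : μ.restrict (Set.Ico a y)
          = (ν.restrict (Set.Ico a y)).withDensity (fun x => (dens x : ℝ≥0∞)) := by
        rw [hμ']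
        exact MeasureTheory.restrict_withDensity measurableSet_Ico _
      calc ∫ x in Set.Ico a y, f x * g x ∂μ
          = ∫ x, f x * g x ∂((ν.restrict (Set.Ico a y)).withDensity
              (fun x => (dens x : ℝ≥0∞))) := by rw [← hres]
        _ = ∫ x, dens x • (f x * g x) ∂(ν.restrict (Set.Ico a y)) :=
            integral_withDensity_eq_integral_smul hdens_meas _
        _ = ∫ x in Set.Ico a y, Gt x ∂ν := by
            refine MeasureTheory.setIntegral_congr_fun measurableSet_Ico fun x hx => ?_
            have hxmem : x ∈ Set.Icc a b := ⟨hx.1, hx.2.le.trans hyb⟩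
            have hfx : 0 < f x := hf_pos x hxmem
            have hFx : F x = f x := hF_eq x hxmem
            rw [hdensdef]
            simp only [NNReal.smul_def, Real.coe_toNNReal _ (inv_nonneg.mpr (hF_pos x).le)]
            rw [hFx, hGt_eq x hxmem]
            rw [smul_eq_mul, ← mul_assoc, inv_mul_cancel₀ hfx.ne', one_mul]
      done
    rw [hμint]
    linarith
  refine ⟨key1, ?_⟩
  -- ## Goal 2 : Grönwall
  have key1' : ∀ z ∈ Set.Ioc a b, f z * g z ≤ ∫ x in Set.Ico a z, ut x ∂μ := by
    intro z hz
    refine le_trans (key1 z hz) (le_of_eq ?_)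
    exact MeasureTheory.integral_congr_ae (MeasureTheory.ae_restrict_of_ae hae)
  set A : Set ℝ := {c | c ∈ Set.Icc a b ∧ ∀ z ∈ Set.Icc a c, f z * g z ≤ 0} with hAdef
  have haA : a ∈ A := by
    refine ⟨⟨le_rfl, hab⟩, fun z hz => ?_⟩
    have : z = a := le_antisymm hz.2 hz.1
    rw [this, hga, mul_zero]
  have hAbdd : BddAbove A := ⟨b, fun w hw => hw.1.2⟩
  have hAne : A.Nonempty := ⟨a, haA⟩
  set c := sSup A with hcdef
  have hac : a ≤ c := le_csSup hAbdd haA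
  have hcb : c ≤ b := csSup_le hAne fun w hw => hw.1.2
  have hu_lt : ∀ z, a ≤ z → z < c → f z * g z ≤ 0 := by
    intro z hza hzc
    obtain ⟨w, hwA, hzw⟩ := exists_lt_of_lt_csSup hAne hzc
    exact hwA.2 z ⟨hza, hzw.le⟩
  have hucle : f c * g c ≤ 0 := by
    rcases eq_or_lt_of_le hac with heq | hac'
    · rw [← heq, hga, mul_zero]
    · have h1 := key1' c ⟨hac', hcb⟩
      have h2 : ∫ x in Set.Ico a c, ut x ∂μ ≤ 0 := by
        refine MeasureTheory.setIntegral_nonpos measurableSet_Ico fun z hz => ?_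
        have hzb : z ∈ Set.Icc a b := ⟨hz.1, hz.2.le.trans hcb⟩
        rw [hut_eq z hzb]
        exact hu_lt z hz.1 hz.2
      linarith
  have hcA : c ∈ A := by
    refine ⟨⟨hac, hcb⟩, fun z hz => ?_⟩
    rcases eq_or_lt_of_le hz.2 with heq | hlt
    · rw [heq]; exact hucle
    · exact hu_lt z hz.1 hlt
  have hceqb : c = b := by
    by_contra hne
    have hclt : c < b := lt_of_le_of_ne hcb hne
    have hμc : μ {c} = 0 := hμac (hatom c ⟨hac, hclt⟩)
    have htend := MeasureTheory.tendsto_measure_iInter_atTop (μ := μ)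
      (s := fun n : ℕ => Set.Ico c (c + 1 / ((n : ℝ) + 1)))
      (fun n => measurableSet_Ico.nullMeasurableSet)
      (fun m n hmn => Set.Ico_subset_Ico le_rfl (by
        have h1 : (0:ℝ) < (m:ℝ) + 1 := by positivity
        have h2 : (m:ℝ) + 1 ≤ (n:ℝ) + 1 := by
          have : (m:ℝ) ≤ n := by exact_mod_cast hmn
          linarith
        have := one_div_le_one_div_of_le h1 h2
        linarith))
      ⟨0, measure_ne_top μ _⟩
    have hInter : ⋂ n : ℕ, Set.Ico c (c + 1 / ((n : ℝ) + 1)) = {c} := by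
      ext z
      simp only [Set.mem_iInter, Set.mem_Ico, Set.mem_singleton_iff]
      constructor
      · intro h
        refine le_antisymm ?_ (h 0).1
        by_contra hzc
        push_neg at hzc
        obtain ⟨n, hn⟩ := exists_nat_one_div_lt (show (0:ℝ) < z - c by linarith)
        have := (h n).2
        linarith
      · rintro rfl
        intro n
        have : (0:ℝ) < 1 / ((n : ℝ) + 1) := by positivity
        exact ⟨le_rfl, by linarith⟩
    rw [hInter, hμc] at htend
    have hev : ∀ᶠ n in atTop,
        (μ ∘ fun n : ℕ => Set.Ico c (c + 1 / ((n : ℝ) + 1))) n < ENNReal.ofReal (1 / 2) :=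
      htend.eventually_lt_const (by simp)
    obtain ⟨n, hn⟩ := hev.exists
    simp only [Function.comp_apply] at hn
    set d := min b (c + 1 / ((n : ℝ) + 1)) with hddef2
    have h1n : (0:ℝ) < 1 / ((n : ℝ) + 1) := by positivity
    have hcd : c < d := lt_min hclt (by linarith)
    have hdb : d ≤ b := min_le_left _ _
    have hμcd : (μ (Set.Ico c d)).toReal ≤ 1 / 2 := by
      have hsub : Set.Ico c d ⊆ Set.Ico c (c + 1 / ((n : ℝ) + 1)) :=
        Set.Ico_subset_Ico le_rfl (min_le_right _ _)
      have hle2 : μ (Set.Ico c d) ≤ ENNReal.ofReal (1 / 2) :=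
        le_trans (measure_mono hsub) hn.le
      exact ENNReal.toReal_le_of_le_ofReal (by norm_num) hle2
    set R := sSup ((fun z => f z * g z) '' Set.Ico c d) with hRdef
    have hbddR : BddAbove ((fun z => f z * g z) '' Set.Ico c d) := by
      refine ⟨|Mf * Mg|, ?_⟩
      rintro _ ⟨z, hz, rfl⟩
      have hzb : z ∈ Set.Icc a b := ⟨hac.trans hz.1, hz.2.le.trans hdb⟩
      simp only
      rw [← hut_eq z hzb]
      exact le_trans (le_abs_self _) (hMfg z)
    have hneR : ((fun z => f z * g z) '' Set.Ico c d).Nonempty :=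
      ⟨_, ⟨c, ⟨le_rfl, hcd⟩, rfl⟩⟩
    have hstar : ∀ x ∈ Set.Ioc c d, f x * g x ≤ max R 0 * (1 / 2) := by
      rintro x ⟨hcx, hxd⟩
      have hax : a < x := lt_of_le_of_lt hac hcx
      have hxb : x ≤ b := hxd.trans hdb
      have h1 := key1' x ⟨hax, hxb⟩
      have hsplitI : ∫ z in Set.Ico a x, ut z ∂μ
          = (∫ z in Set.Ico a c, ut z ∂μ) + ∫ z in Set.Ico c x, ut z ∂μ := by
        rw [← MeasureTheory.setIntegral_union (Set.Ico_disjoint_Ico_same)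
          measurableSet_Ico hut_int.integrableOn hut_int.integrableOn,
          Set.Ico_union_Ico_eq_Ico hac (hcx.le.trans (le_refl x))]
      have hIc : ∫ z in Set.Ico a c, ut z ∂μ ≤ 0 := by
        refine MeasureTheory.setIntegral_nonpos measurableSet_Ico fun z hz => ?_
        have hzb : z ∈ Set.Icc a b := ⟨hz.1, hz.2.le.trans hcb⟩
        rw [hut_eq z hzb]
        exact hu_lt z hz.1 hz.2
      have hIcx : ∫ z in Set.Ico c x, ut z ∂μ ≤ max R 0 * (1 / 2) := by
        have hmon : ∫ z in Set.Ico c x, ut z ∂μ ≤ ∫ _ in Set.Ico c x, max R 0 ∂μ := by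
          refine MeasureTheory.setIntegral_mono_on hut_int.integrableOn
            (MeasureTheory.integrableOn_const (measure_ne_top μ _))
            measurableSet_Ico fun z hz => ?_
          have hzb : z ∈ Set.Icc a b := ⟨hac.trans hz.1, (hz.2.le.trans hxd).trans hdb⟩
          rw [hut_eq z hzb]
          refine le_trans (le_csSup hbddR ⟨z, ⟨hz.1, lt_of_lt_of_le hz.2 hxd⟩, rfl⟩)
            (le_max_left _ _)
        rw [MeasureTheory.setIntegral_const, smul_eq_mul] at hmon
        refine le_trans hmon ?_
        rw [mul_comm]
        refine mul_le_mul_of_nonneg_left ?_ (le_max_right R 0)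
        refine le_trans ?_ hμcd
        refine ENNReal.toReal_mono (measure_ne_top μ _) ?_
        exact measure_mono (Set.Ico_subset_Ico le_rfl hxd)
      calc f x * g x ≤ ∫ z in Set.Ico a x, ut z ∂μ := h1
        _ = (∫ z in Set.Ico a c, ut z ∂μ) + ∫ z in Set.Ico c x, ut z ∂μ := hsplitI
        _ ≤ 0 + max R 0 * (1 / 2) := add_le_add hIc hIcx
        _ = max R 0 * (1 / 2) := zero_add _
    have hR0 : R ≤ 0 := by
      by_contra hpos
      push_neg at hpos
      have hRle : R ≤ max R 0 * (1 / 2) := by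
        refine csSup_le hneR ?_
        rintro _ ⟨z, hz, rfl⟩
        rcases eq_or_lt_of_le hz.1 with heq | hzc
        · refine le_trans ?_ (by positivity : (0:ℝ) ≤ max R 0 * (1 / 2))
          rw [← heq]
          exact hucle
        · exact hstar z ⟨hzc, hz.2.le⟩
      rw [max_eq_left hpos.le] at hRle
      linarith
    have hdA : d ∈ A := by
      refine ⟨⟨hac.trans hcd.le, hdb⟩, fun z hz => ?_⟩
      rcases lt_trichotomy z c with h | h | h
      · exact hu_lt z hz.1 h
      · rw [h]; exact hucle
      · rcases eq_or_lt_of_le hz.2 with heq | hzd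
        · rw [heq]
          refine le_trans (hstar d ⟨hcd, le_rfl⟩) ?_
          rw [max_eq_right hR0]
          norm_num
        · exact le_trans (le_csSup hbddR ⟨z, ⟨h.le, hzd⟩, rfl⟩) hR0
    have : d ≤ c := le_csSup hAbdd hdA
    linarith
  intro x hx
  have h1 : f x * g x ≤ 0 := (hceqb ▸ hcA).2 x hx
  have h2 : 0 ≤ g x := hg_nonneg x hx
  have h3 : 0 < f x := hf_pos x hx
  nlinarith
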